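/- arXiv:1806.02587 — 4 statements merged into one kernel-verified Lean document; each statement's English description precedes it below -/
import Mathlib

section
/- Let Ā be an N×N real matrix, let B̄_f, B̄_h, B̄_w be real matrices with N rows, let α > 0 and β > 0 be real numbers, and set B̄ = [√2·α·B̄_f √2·β·B̄_h B̄_w] (horizontal block concatenation). Suppose P is an N×N real symmetric positive definite matrix such that (i) the block matrix [[Ā P + P Āᵀ + 4P, B̄], [B̄ᵀ, −I]] is negative semidefinite, and (ii) 4P + (2α² − 1) B̄_f B̄_fᵀ + (2β² − 1) B̄_h B̄_hᵀ + B̄_w B̄_wᵀ is positive semidefinite. Then, with S = P⁻¹, the matrix Āᵀ S + S Ā + S B̄_h B̄_hᵀ S + S B̄_f B̄_fᵀ S is negative semidefinite. -/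
open Matrix

/-- Corollary 1 of the paper. Suppose `P > 0` is symmetric with
`[[ĀP + PĀᵀ + 4P, B̄],[B̄ᵀ, −I]] ⪯ 0` where `B̄ = [√2·α·B̄_f  √2·β·B̄_h  B̄_w]`, and
`4P + (2α²−1) B̄_f B̄_fᵀ + (2β²−1) B̄_h B̄_hᵀ + B̄_w B̄_wᵀ ⪰ 0`. Then with `S = P⁻¹`,
`Āᵀ S + S Ā + S B̄_h B̄_hᵀ S + S B̄_f B̄_fᵀ S ⪯ 0`. -/
theorem fault_tolerant_corollary (N p q r : ℕ)
    (A : Matrix (Fin N) (Fin N) ℝ)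
    (Bf : Matrix (Fin N) (Fin p) ℝ) (Bh : Matrix (Fin N) (Fin q) ℝ)
    (Bw : Matrix (Fin N) (Fin r) ℝ)
    (α β : ℝ) (hα : 0 < α) (hβ : 0 < β)
    (P : Matrix (Fin N) (Fin N) ℝ) (hPsymm : P.IsSymm) (hP : P.PosDef)
    (B : Matrix (Fin N) (Fin p ⊕ (Fin q ⊕ Fin r)) ℝ)
    (hB : B = fromCols ((Real.sqrt 2 * α) • Bf)
        (fromCols ((Real.sqrt 2 * β) • Bh) Bw))
    (h1 : (-(fromBlocks (A * P + P * Aᵀ + (4 : ℝ) • P) B Bᵀ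
        (-(1 : Matrix (Fin p ⊕ (Fin q ⊕ Fin r)) (Fin p ⊕ (Fin q ⊕ Fin r)) ℝ)))).PosSemidef)
    (h2 : ((4 : ℝ) • P + (2 * α ^ 2 - 1) • (Bf * Bfᵀ)
        + (2 * β ^ 2 - 1) • (Bh * Bhᵀ) + Bw * Bwᵀ).PosSemidef) :
    (-(Aᵀ * P⁻¹ + P⁻¹ * A + P⁻¹ * (Bh * Bhᵀ) * P⁻¹
        + P⁻¹ * (Bf * Bfᵀ) * P⁻¹)).PosSemidef := by
  -- Schur complement step
  set X : Matrix (Fin N) (Fin N) ℝ := A * P + P * Aᵀ + (4 : ℝ) • P with hX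
  have hkey : (fromBlocks (-X) (-B) (-B)ᴴ
      (1 : Matrix (Fin p ⊕ (Fin q ⊕ Fin r)) (Fin p ⊕ (Fin q ⊕ Fin r)) ℝ)).PosSemidef := by
    have : (fromBlocks (-X) (-B) (-B)ᴴ
        (1 : Matrix (Fin p ⊕ (Fin q ⊕ Fin r)) (Fin p ⊕ (Fin q ⊕ Fin r)) ℝ)) =
        -(fromBlocks X B Bᵀ (-1)) := by
      rw [fromBlocks_neg, conjTranspose_eq_transpose_of_trivial, transpose_neg, neg_neg]
    rw [this]
    exact h1
  haveI : Invertible (1 : Matrix (Fin p ⊕ (Fin q ⊕ Fin r)) (Fin p ⊕ (Fin q ⊕ Fin r)) ℝ) := invertibleOne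
  have hschur : (-X - (-B) * (1 : Matrix (Fin p ⊕ (Fin q ⊕ Fin r))
      (Fin p ⊕ (Fin q ⊕ Fin r)) ℝ)⁻¹ * (-B)ᴴ).PosSemidef :=
    (PosDef.fromBlocks₂₂ (-X) (-B) Matrix.PosDef.one).mp hkey
  have hBBt : B * Bᵀ = (2 * α ^ 2) • (Bf * Bfᵀ) + (2 * β ^ 2) • (Bh * Bhᵀ) + Bw * Bwᵀ := by
    subst hB
    rw [transpose_fromCols, transpose_fromCols, fromCols_mul_fromRows,
      fromCols_mul_fromRows]
    rw [transpose_smul, transpose_smul, Matrix.smul_mul, Matrix.smul_mul, Matrix.mul_smul,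
      Matrix.mul_smul, smul_smul, smul_smul]
    have h2' : Real.sqrt 2 * Real.sqrt 2 = 2 := Real.mul_self_sqrt (by norm_num)
    have hsq : Real.sqrt 2 ^ 2 = 2 := Real.sq_sqrt (by norm_num)
    have hα2 : Real.sqrt 2 * α * (Real.sqrt 2 * α) = 2 * α ^ 2 := by ring_nf; rw [hsq]; ring
    have hβ2 : Real.sqrt 2 * β * (Real.sqrt 2 * β) = 2 * β ^ 2 := by ring_nf; rw [hsq]; ring
    rw [hα2, hβ2, add_assoc]
  have hsum : (-(A * P + P * Aᵀ + Bf * Bfᵀ + Bh * Bhᵀ)).PosSemidef := by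
    have := hschur.add h2
    have heq : -X - (-B) * (1 : Matrix (Fin p ⊕ (Fin q ⊕ Fin r))
        (Fin p ⊕ (Fin q ⊕ Fin r)) ℝ)⁻¹ * (-B)ᴴ
        + ((4 : ℝ) • P + (2 * α ^ 2 - 1) • (Bf * Bfᵀ)
          + (2 * β ^ 2 - 1) • (Bh * Bhᵀ) + Bw * Bwᵀ)
        = -(A * P + P * Aᵀ + Bf * Bfᵀ + Bh * Bhᵀ) := by
      rw [conjTranspose_eq_transpose_of_trivial, inv_one, Matrix.mul_one, transpose_neg,
        Matrix.neg_mul, Matrix.mul_neg, neg_neg, hBBt, hX]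
      module
    rwa [heq] at this
  -- conjugation by P⁻¹
  have hdet : IsUnit P.det := isUnit_iff_ne_zero.mpr hP.det_pos.ne'
  have hPP : P * P⁻¹ = 1 := mul_nonsing_inv P hdet
  have hPinvT : (P⁻¹)ᵀ = P⁻¹ := by rw [transpose_nonsing_inv, hPsymm]
  have := hsum.mul_mul_conjTranspose_same P⁻¹
  have heq2 : P⁻¹ * -(A * P + P * Aᵀ + Bf * Bfᵀ + Bh * Bhᵀ) * (P⁻¹)ᴴ
      = -(Aᵀ * P⁻¹ + P⁻¹ * A + P⁻¹ * (Bh * Bhᵀ) * P⁻¹ + P⁻¹ * (Bf * Bfᵀ) * P⁻¹) := by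
    rw [conjTranspose_eq_transpose_of_trivial, hPinvT, Matrix.mul_neg, Matrix.neg_mul]
    congr 1
    have h1' : P⁻¹ * (A * P) * P⁻¹ = P⁻¹ * A := by
      rw [Matrix.mul_assoc, Matrix.mul_assoc, hPP, Matrix.mul_one]
    have h2' : P⁻¹ * (P * Aᵀ) * P⁻¹ = Aᵀ * P⁻¹ := by
      rw [← Matrix.mul_assoc, nonsing_inv_mul P hdet, Matrix.one_mul]
    calc P⁻¹ * (A * P + P * Aᵀ + Bf * Bfᵀ + Bh * Bhᵀ) * P⁻¹
        = P⁻¹ * (A * P) * P⁻¹ + P⁻¹ * (P * Aᵀ) * P⁻¹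
          + P⁻¹ * (Bf * Bfᵀ) * P⁻¹ + P⁻¹ * (Bh * Bhᵀ) * P⁻¹ := by
          simp only [Matrix.mul_add, Matrix.add_mul]
      _ = _ := by rw [h1', h2']; abel
  rwa [heq2] at this
end

section
/- Let A be an N×N real matrix and let Γ : [0, ∞) → (N×N real symmetric matrices) be a differentiable matrix-valued function satisfying the differential matrix inequality Γ′(t) ⪰ A Γ(t) + Γ(t) Aᵀ (i.e., Γ′(t) − A Γ(t) − Γ(t) Aᵀ is positive semidefinite) for all t ≥ 0. Then for all t ≥ 0, Γ(t) ⪰ exp(t A) Γ(0) exp(t Aᵀ), i.e., Γ(t) − exp(t A) Γ(0) exp(t A)ᵀ is positive semidefinite. -/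
open Matrix

lemma exp_smul_entry_hasDerivAt {N : ℕ} (B : Matrix (Fin N) (Fin N) ℝ) (i k : Fin N) (s : ℝ) :
    HasDerivAt (fun u : ℝ => NormedSpace.exp (u • B) i k)
      ((B * NormedSpace.exp (s • B)) i k) s := by
  letI : NormedRing (Matrix (Fin N) (Fin N) ℝ) := Matrix.linftyOpNormedRing
  letI : NormedAlgebra ℝ (Matrix (Fin N) (Fin N) ℝ) := Matrix.linftyOpNormedAlgebra
  have h := hasDerivAt_exp_smul_const' (𝕂 := ℝ) B s
  have hc : Continuous fun M : Matrix (Fin N) (Fin N) ℝ => M i k :=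
    (continuous_apply k).comp (continuous_apply i)
  let L : Matrix (Fin N) (Fin N) ℝ →L[ℝ] ℝ :=
    { toFun := fun M => M i k, map_add' := fun _ _ => rfl, map_smul' := fun _ _ => rfl,
      cont := hc }
  exact L.hasFDerivAt.comp_hasDerivAt s h

/-- If a differentiable symmetric-matrix-valued function `Γ` satisfies
`Γ′(t) ⪰ A Γ(t) + Γ(t) Aᵀ` for all `t ≥ 0`, then
`Γ(t) ⪰ exp(t A) Γ(0) exp(t A)ᵀ` for all `t ≥ 0`. -/
theorem matrix_gronwall (N : ℕ) (A : Matrix (Fin N) (Fin N) ℝ)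
    (Γ Γ' : ℝ → Matrix (Fin N) (Fin N) ℝ)
    (hsymm : ∀ t ∈ Set.Ici (0 : ℝ), (Γ t).IsSymm)
    (hderiv : ∀ t ∈ Set.Ici (0 : ℝ), ∀ i j,
      HasDerivWithinAt (fun s => Γ s i j) (Γ' t i j) (Set.Ici 0) t)
    (hineq : ∀ t ∈ Set.Ici (0 : ℝ), (Γ' t - A * Γ t - Γ t * Aᵀ).PosSemidef) :
    ∀ t ∈ Set.Ici (0 : ℝ),
      (Γ t - NormedSpace.exp (t • A) * Γ 0 * (NormedSpace.exp (t • A))ᵀ).PosSemidef := by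
  intro t ht
  rw [Set.mem_Ici] at ht
  set E := NormedSpace.exp (t • A) with hE
  have hΓtsymm : (Γ t)ᵀ = Γ t := hsymm t ht
  have hΓ0symm : (Γ 0)ᵀ = Γ 0 := hsymm 0 (Set.mem_Ici.mpr le_rfl)
  refine Matrix.PosSemidef.of_dotProduct_mulVec_nonneg ?_ ?_
  · -- Hermitian
    show (Γ t - E * Γ 0 * Eᵀ)ᴴ = _
    have : ∀ M : Matrix (Fin N) (Fin N) ℝ, Mᴴ = Mᵀ := by
      intro M; ext i j; simp [conjTranspose_apply]
    rw [this, transpose_sub, hΓtsymm, transpose_mul, transpose_mul, transpose_transpose,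
      ← Matrix.mul_assoc, hΓ0symm]
  · intro x
    -- setup
    set B := Aᵀ with hB
    set y : ℝ → Fin N → ℝ := fun s => NormedSpace.exp ((t - s) • B) *ᵥ x with hy
    set w : ℝ → Fin N → ℝ := fun s => -(B *ᵥ y s) with hw
    have hy' : ∀ (s : ℝ) (i : Fin N), HasDerivAt (fun u => y u i) (w s i) s := by
      intro s i
      have hin : HasDerivAt (fun u : ℝ => t - u) (-1) s := by
        simpa using (hasDerivAt_id s).const_sub t
      have h1 : ∀ k, HasDerivAt (fun u : ℝ => NormedSpace.exp ((t - u) • B) i k)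
          (-((B * NormedSpace.exp ((t - s) • B)) i k)) s := by
        intro k
        have := (exp_smul_entry_hasDerivAt B i k (t - s)).comp s hin
        simpa [Function.comp_def] using this
      have hsum := HasDerivAt.fun_sum (fun k (_ : k ∈ Finset.univ) => (h1 k).mul_const (x k))
      have heq : ∀ u : ℝ, y u i = ∑ k, NormedSpace.exp ((t - u) • B) i k * x k := by
        intro u; simp [hy, Matrix.mulVec, dotProduct]
      have hval : w s i = ∑ k, -((B * NormedSpace.exp ((t - s) • B)) i k) * x k := by
        simp [hw, hy, Matrix.mulVec_mulVec, Matrix.mulVec, dotProduct, neg_mul,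
          Finset.sum_neg_distrib]
      rw [hval]
      exact hsum.congr_of_eventuallyEq (Filter.Eventually.of_forall fun u => heq u)
    set f : ℝ → ℝ := fun s => ∑ i, y s i * ∑ j, Γ s i j * y s j with hf
    have hfval : ∀ s, f s = y s ⬝ᵥ (Γ s *ᵥ y s) := fun s => rfl
    set D : ℝ → ℝ := fun s =>
      w s ⬝ᵥ (Γ s *ᵥ y s) + y s ⬝ᵥ (Γ' s *ᵥ y s) + y s ⬝ᵥ (Γ s *ᵥ w s) with hD
    have hfD : ∀ s : ℝ, 0 < s → HasDerivAt f (D s) s := by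
      intro s hs
      have hΓd : ∀ i j, HasDerivAt (fun u => Γ u i j) (Γ' s i j) s := fun i j =>
        (hderiv s (le_of_lt hs) i j).hasDerivAt (Ici_mem_nhds hs)
      have hterm : ∀ i, HasDerivAt (fun u => y u i * ∑ j, Γ u i j * y u j)
          (w s i * (∑ j, Γ s i j * y s j) +
            y s i * (∑ j, (Γ' s i j * y s j + Γ s i j * w s j))) s := by
        intro i
        exact (hy' s i).mul (HasDerivAt.fun_sum fun j _ => (hΓd i j).mul (hy' s j))
      have := HasDerivAt.fun_sum (fun i (_ : i ∈ Finset.univ) => hterm i)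
      refine this.congr_deriv ?_
      simp only [hD, dotProduct, Matrix.mulVec, Finset.mul_sum, mul_add,
        Finset.sum_add_distrib, mul_assoc]
      ring_nf
    have hD_nonneg : ∀ s : ℝ, 0 ≤ s → 0 ≤ D s := by
      intro s hs
      have hps := (hineq s hs).dotProduct_mulVec_nonneg (y s)
      have h1 : w s ⬝ᵥ (Γ s *ᵥ y s) = -(y s ⬝ᵥ ((A * Γ s) *ᵥ y s)) := by
        show -(Aᵀ *ᵥ y s) ⬝ᵥ (Γ s *ᵥ y s) = _
        rw [neg_dotProduct, Matrix.mulVec_transpose, ← Matrix.dotProduct_mulVec,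
          Matrix.mulVec_mulVec]
      have h3 : y s ⬝ᵥ (Γ s *ᵥ w s) = -(y s ⬝ᵥ ((Γ s * Aᵀ) *ᵥ y s)) := by
        show y s ⬝ᵥ (Γ s *ᵥ -(Aᵀ *ᵥ y s)) = _
        rw [Matrix.mulVec_neg, Matrix.mulVec_mulVec, dotProduct_neg]
      have : D s = y s ⬝ᵥ ((Γ' s - A * Γ s - Γ s * Aᵀ) *ᵥ y s) := by
        rw [hD]
        simp only [Matrix.sub_mulVec, dotProduct_sub]
        rw [h1, h3]
        ring
      rw [this]
      simpa using hps
    -- continuity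
    have hycont : ∀ i, Continuous fun s => y s i := fun i =>
      continuous_iff_continuousAt.2 fun s => (hy' s i).continuousAt
    have hΓcont : ∀ i j, ContinuousOn (fun s => Γ s i j) (Set.Icc 0 t) := by
      intro i j s hs
      exact ((hderiv s hs.1 i j).continuousWithinAt).mono Set.Icc_subset_Ici_self
    have hfc : ContinuousOn f (Set.Icc 0 t) := by
      apply continuousOn_finset_sum
      intro i _
      exact (hycont i).continuousOn.mul
        (continuousOn_finset_sum _ fun j _ => (hΓcont i j).mul (hycont j).continuousOn)
    have hmono : MonotoneOn f (Set.Icc 0 t) := by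
      apply monotoneOn_of_deriv_nonneg (convex_Icc 0 t) hfc
      · rw [interior_Icc]
        intro s hs
        exact ((hfD s hs.1).differentiableAt).differentiableWithinAt
      · rw [interior_Icc]
        intro s hs
        rw [(hfD s hs.1).deriv]
        exact hD_nonneg s (le_of_lt hs.1)
    have key : f 0 ≤ f t := hmono ⟨le_rfl, ht⟩ ⟨ht, le_rfl⟩ ht
    have hyt : y t = x := by
      simp [hy, sub_self, NormedSpace.exp_zero, Matrix.one_mulVec]
    have hy0 : y 0 = Eᵀ *ᵥ x := by
      rw [hy]
      simp only [sub_zero, hB, hE, ← Matrix.transpose_smul, Matrix.exp_transpose]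
    have hft : f t = x ⬝ᵥ (Γ t *ᵥ x) := by rw [hfval, hyt]
    have hf0 : f 0 = x ⬝ᵥ ((E * Γ 0 * Eᵀ) *ᵥ x) := by
      rw [hfval, hy0]
      rw [Matrix.mul_assoc, ← Matrix.mulVec_mulVec, ← Matrix.mulVec_mulVec,
        Matrix.dotProduct_mulVec x E, ← Matrix.mulVec_transpose]
    have : (0:ℝ) ≤ x ⬝ᵥ ((Γ t - E * Γ 0 * Eᵀ) *ᵥ x) := by
      rw [Matrix.sub_mulVec, dotProduct_sub, sub_nonneg, ← hft, ← hf0]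
      exact key
    simpa using this
end

section
/- Let A be an N×N real matrix and P an N×N real symmetric positive definite matrix such that A P + P Aᵀ is negative definite. Then A is Hurwitz: every complex eigenvalue λ of A satisfies Re(λ) < 0. -/
open Matrix

open Complex in
lemma re_quad_pos {n : ℕ} {Q : Matrix (Fin n) (Fin n) ℝ} (hQ : Q.PosDef)
    (x : Fin n → ℂ) (hx : x ≠ 0) :
    0 < (star x ⬝ᵥ (Q.map Complex.ofReal) *ᵥ x).re := by
  set a : Fin n → ℝ := fun i => (x i).re with ha
  set b : Fin n → ℝ := fun i => (x i).im with hb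
  have key : (star x ⬝ᵥ (Q.map Complex.ofReal) *ᵥ x).re
      = a ⬝ᵥ Q *ᵥ a + b ⬝ᵥ Q *ᵥ b := by
    simp only [dotProduct, mulVec, Pi.star_apply, map_apply, Complex.re_sum,
      Finset.mul_sum]
    rw [← Finset.sum_add_distrib]
    refine Finset.sum_congr rfl fun i _ => ?_
    simp only [Complex.re_sum, Finset.mul_sum, ← Finset.sum_add_distrib]
    refine Finset.sum_congr rfl fun j _ => ?_
    simp [Complex.mul_re, Complex.conj_re, Complex.conj_im, ha, hb]
  rw [key]
  have hab : a ≠ 0 ∨ b ≠ 0 := by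
    by_contra h
    push_neg at h
    apply hx
    funext i
    have h1 := congrFun h.1 i
    have h2 := congrFun h.2 i
    simp only [ha, hb, Pi.zero_apply] at h1 h2
    exact Complex.ext h1 h2
  rcases hab with h | h
  · have h1 := hQ.dotProduct_mulVec_pos h
    have h2 := hQ.posSemidef.dotProduct_mulVec_nonneg b
    simp only [star_trivial] at h1 h2
    linarith
  · have h1 := hQ.dotProduct_mulVec_pos h
    have h2 := hQ.posSemidef.dotProduct_mulVec_nonneg a
    simp only [star_trivial] at h1 h2
    linarith

/-- Lyapunov criterion. If `P` is real symmetric positive definite and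
`A P + P Aᵀ` is negative definite, then `A` is Hurwitz: every complex eigenvalue `λ` of `A`
satisfies `Re(λ) < 0`. -/
theorem lyapunov_hurwitz (N : ℕ) (A : Matrix (Fin N) (Fin N) ℝ)
    (P : Matrix (Fin N) (Fin N) ℝ) (hPsymm : P.IsSymm) (hP : P.PosDef)
    (hLyap : (-(A * P + P * Aᵀ)).PosDef) :
    ∀ μ ∈ spectrum ℂ (A.map Complex.ofReal), μ.re < 0 := by
  intro μ hμ
  set Ac := A.map Complex.ofReal with hAc
  set B := Acᴴ with hB
  -- star μ is in the spectrum of the conjugate transpose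
  have hμ' : (starRingEnd ℂ) μ ∈ spectrum ℂ B := by
    rw [spectrum.mem_iff] at hμ ⊢
    intro hcon
    apply hμ
    rw [Matrix.isUnit_iff_isUnit_det] at hcon ⊢
    have heq : (algebraMap ℂ (Matrix (Fin N) (Fin N) ℂ)) ((starRingEnd ℂ) μ) - B
        = ((algebraMap ℂ (Matrix (Fin N) (Fin N) ℂ)) μ - Ac)ᴴ := by
      rw [conjTranspose_sub]
      congr 1
      ext i j
      simp [Matrix.algebraMap_matrix_apply, conjTranspose_apply]
      split <;> simp_all [eq_comm]
    rw [heq, det_conjTranspose, isUnit_star] at hcon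
    exact hcon
  -- extract an eigenvector
  rw [← AlgEquiv.spectrum_eq (Matrix.toLinAlgEquiv') B,
    ← Module.End.hasEigenvalue_iff_mem_spectrum] at hμ'
  obtain ⟨w, hw⟩ := hμ'.exists_hasEigenvector
  have hw0 : w ≠ 0 := hw.right
  have hweq : B *ᵥ w = (starRingEnd ℂ) μ • w := by
    have := hw.apply_eq_smul
    rwa [Matrix.toLinAlgEquiv'_apply] at this
  set Pc := P.map Complex.ofReal with hPc
  have hmapmul : ∀ (X Y : Matrix (Fin N) (Fin N) ℝ),
      (X * Y).map Complex.ofReal = X.map Complex.ofReal * Y.map Complex.ofReal := by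
    intro X Y
    ext i j
    simp [Matrix.mul_apply]
  have hAt : (Aᵀ.map Complex.ofReal) = Acᴴ := by
    ext i j
    simp [conjTranspose_apply, Complex.conj_ofReal, hAc]
  have hmap : (A * P + P * Aᵀ).map Complex.ofReal = Ac * Pc + Pc * Acᴴ := by
    have hadd : (A * P + P * Aᵀ).map Complex.ofReal
        = (A * P).map Complex.ofReal + (P * Aᵀ).map Complex.ofReal := by
      ext i j; simp
    rw [hadd, hmapmul, hmapmul, hAt]
  have h1 : star w ᵥ* Ac = μ • star w := by
    have h := congrArg star hweq
    rw [hB, star_mulVec, conjTranspose_conjTranspose, star_smul] at h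
    simpa using h
  have hz : star w ⬝ᵥ ((A * P + P * Aᵀ).map Complex.ofReal) *ᵥ w
      = (μ + starRingEnd ℂ μ) * (star w ⬝ᵥ Pc *ᵥ w) := by
    rw [hmap, add_mulVec, dotProduct_add, ← mulVec_mulVec, ← mulVec_mulVec, ← hB, hweq,
      mulVec_smul, dotProduct_smul, dotProduct_mulVec, h1, smul_dotProduct]
    simp only [smul_eq_mul]
    ring
  have hzneg : (star w ⬝ᵥ ((A * P + P * Aᵀ).map Complex.ofReal) *ᵥ w).re < 0 := by
    have h := re_quad_pos hLyap w hw0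
    have hmn : ((-(A * P + P * Aᵀ)).map Complex.ofReal)
        = -((A * P + P * Aᵀ).map Complex.ofReal) := by
      ext i j
      simp
    rw [hmn] at h
    simp only [neg_mulVec, dotProduct_neg, Complex.neg_re] at h
    linarith
  have hp : 0 < (star w ⬝ᵥ Pc *ᵥ w).re := re_quad_pos hP w hw0
  rw [hz, Complex.add_conj, Complex.re_ofReal_mul] at hzneg
  nlinarith
end

section
/- Let A be an N×N real Hurwitz matrix (every complex eigenvalue has negative real part), let M be an N×N real symmetric positive semidefinite matrix, and let P be an N×N real symmetric matrix with A P + P Aᵀ + M ⪯ 0. Suppose Q : [0, ∞) → (N×N real symmetric matrices) is differentiable and satisfies Q′(t) ⪯ A Q(t) + Q(t) Aᵀ + M for all t ≥ 0. Then for every vector v ∈ ℝᴺ, limsup_{t→∞} vᵀ Q(t) v ≤ vᵀ P v; in particular, for every ε > 0 there exists T such that Q(t) ⪯ P + ε·I for all t ≥ T. -/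
open Matrix Filter NormedSpace
attribute [local instance] Matrix.linftyOpNormedRing Matrix.linftyOpNormedAlgebra

lemma exp_mulVec_trunc {N : ℕ} (C : Matrix (Fin N) (Fin N) ℂ) (x : Fin N → ℂ) (m : ℕ)
    (hx : C ^ m *ᵥ x = 0) :
    exp C *ᵥ x = ∑ k ∈ Finset.range m, ((k.factorial : ℂ)⁻¹) • (C ^ k *ᵥ x) := by
  classical
  let L : Matrix (Fin N) (Fin N) ℂ →ₗ[ℂ] (Fin N → ℂ) :=
    { toFun := fun X => X *ᵥ x
      map_add' := fun X Y => by simp [Matrix.add_mulVec]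
      map_smul' := fun c X => by simp [Matrix.smul_mulVec] }
  have h1 : exp C *ᵥ x = ∑' n : ℕ, ((n.factorial : ℂ)⁻¹) • (C ^ n *ᵥ x) := by
    have hs := expSeries_summable' (𝕂 := ℂ) C
    have h2 := (LinearMap.toContinuousLinearMap L).map_tsum hs
    have h3 : exp C = ∑' n : ℕ, ((n.factorial : ℂ)⁻¹) • C ^ n := by rw [exp_eq_tsum (𝕂 := ℂ)]
    rw [h3]
    simpa [L, Matrix.smul_mulVec] using h2
  rw [h1]
  refine tsum_eq_sum ?_
  intro k hk
  rw [Finset.mem_range, not_lt] at hk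
  have h4 : C ^ k *ᵥ x = 0 := by
    have h5 : C ^ k = C ^ (k - m) * C ^ m := by rw [← pow_add]; congr 1; omega
    rw [h5, ← Matrix.mulVec_mulVec, hx, Matrix.mulVec_zero]
  simp [h4]

lemma scalar_decay (μ : ℂ) (hμ : μ.re < 0) (k : ℕ) :
    Tendsto (fun t : ℝ => Complex.exp (t * μ) * ((k.factorial : ℂ)⁻¹) * (t : ℂ) ^ k)
      atTop (nhds 0) := by
  set c0 : ℝ := -μ.re with hc0
  have hc0pos : 0 < c0 := by simp [hc0]; linarith
  have hg : Tendsto (fun t : ℝ => ((k.factorial : ℝ)⁻¹ * c0⁻¹ ^ k) * ((c0 * t) ^ k * Real.exp (-(c0 * t)))) atTop (nhds 0) := by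
    have h0 : Tendsto (fun t : ℝ => (c0 * t) ^ k * Real.exp (-(c0 * t))) atTop (nhds 0) :=
      (Real.tendsto_pow_mul_exp_neg_atTop_nhds_zero k).comp
        (Filter.Tendsto.const_mul_atTop hc0pos tendsto_id)
    simpa using h0.const_mul ((k.factorial : ℝ)⁻¹ * c0⁻¹ ^ k)
  refine squeeze_zero_norm' ?_ hg
  filter_upwards [eventually_ge_atTop (0 : ℝ)] with t ht
  have h1 : ‖Complex.exp (t * μ) * ((k.factorial : ℂ)⁻¹) * (t : ℂ) ^ k‖
      = Real.exp (t * μ.re) * (k.factorial : ℝ)⁻¹ * t ^ k := by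
    simp [Complex.norm_exp, abs_of_nonneg ht,
      Complex.norm_natCast]
  rw [h1]
  have h2 : (c0 * t) ^ k = c0 ^ k * t ^ k := mul_pow c0 t k
  have h3 : Real.exp (-(c0 * t)) = Real.exp (t * μ.re) := by rw [hc0]; ring_nf
  rw [h2, h3]
  have : (k.factorial : ℝ)⁻¹ * c0⁻¹ ^ k * (c0 ^ k * t ^ k * Real.exp (t * μ.re))
      = Real.exp (t * μ.re) * (k.factorial : ℝ)⁻¹ * t ^ k := by
    field_simp
    rw [← mul_pow, one_div, inv_mul_cancel₀ hc0pos.ne', one_pow, one_mul]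
  rw [this]

lemma hurwitz_exp_mulVec_tendsto {N : ℕ} (B : Matrix (Fin N) (Fin N) ℂ)
    (hB : ∀ μ ∈ spectrum ℂ B, μ.re < 0) (x : Fin N → ℂ) :
    Tendsto (fun t : ℝ => exp (t • B) *ᵥ x) atTop (nhds 0) := by
  classical
  set f : Module.End ℂ (Fin N → ℂ) := Matrix.toLinAlgEquiv' B with hf
  have hx : x ∈ ⨆ μ : ℂ, f.maxGenEigenspace μ := by
    rw [Module.End.iSup_maxGenEigenspace_eq_top f]; trivial
  refine Submodule.iSup_induction (motive := fun y => Tendsto (fun t : ℝ => exp (t • B) *ᵥ y) atTop (nhds 0)) _ hx ?_ ?_ ?_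
  · intro μ y hy
    by_cases hy0 : y = 0
    · simpa [hy0] using tendsto_const_nhds
    have hμspec : μ.re < 0 := by
      apply hB
      have hne : f.maxGenEigenspace μ ≠ ⊥ := by
        intro hbot
        rw [hbot] at hy
        exact hy0 (Submodule.mem_bot ℂ |>.mp hy)
      have h1 : f.HasUnifEigenvalue μ 1 := Module.End.HasUnifEigenvalue.lt zero_lt_one hne
      have h2 := h1.mem_spectrum
      rwa [hf, AlgEquiv.spectrum_eq] at h2
    obtain ⟨m, hm⟩ := (Module.End.mem_maxGenEigenspace f μ y).mp hy
    set C : Matrix (Fin N) (Fin N) ℂ := B - μ • 1 with hC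
    have hmat : C ^ m *ᵥ y = 0 := by
      have he : Matrix.toLinAlgEquiv' (C ^ m) = (f - μ • 1) ^ m := by
        rw [map_pow, map_sub, _root_.map_smul, _root_.map_one]
      have h6 : Matrix.toLinAlgEquiv' (C ^ m) y = 0 := by rw [he]; exact hm
      rw [Matrix.toLinAlgEquiv'_apply] at h6
      exact h6
    have key : ∀ t : ℝ, exp (t • B) *ᵥ y
        = ∑ k ∈ Finset.range m,
            (Complex.exp (t * μ) * ((k.factorial : ℂ)⁻¹) * (t : ℂ) ^ k) • (C ^ k *ᵥ y) := by
      intro t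
      have hcoe : ∀ (r : ℝ) (X : Matrix (Fin N) (Fin N) ℂ), (r : ℂ) • X = r • X := fun r X => by
        rw [← algebraMap_smul ℂ r X]; norm_num
      have hsplit : t • B = algebraMap ℂ (Matrix (Fin N) (Fin N) ℂ) ((t : ℂ) * μ) + t • C := by
        rw [Algebra.algebraMap_eq_smul_one, hC, smul_sub, mul_smul, hcoe]
        abel
      have hcomm : Commute (algebraMap ℂ (Matrix (Fin N) (Fin N) ℂ) ((t : ℂ) * μ)) (t • C) :=
        (Algebra.commutes _ _)
      rw [hsplit, Matrix.exp_add_of_commute _ _ hcomm]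
      rw [show exp (algebraMap ℂ (Matrix (Fin N) (Fin N) ℂ) ((t : ℂ) * μ))
          = algebraMap ℂ (Matrix (Fin N) (Fin N) ℂ) (exp ((t : ℂ) * μ)) from
        (algebraMap_exp_comm ((t : ℂ) * μ)).symm]
      have hce : exp ((t : ℂ) * μ) = Complex.exp ((t : ℂ) * μ) := by
        rw [Complex.exp_eq_exp_ℂ]
      have htrunc : exp (t • C) *ᵥ y
          = ∑ k ∈ Finset.range m, ((k.factorial : ℂ)⁻¹) • ((t • C) ^ k *ᵥ y) := by
        apply exp_mulVec_trunc
        rw [smul_pow, Matrix.smul_mulVec, hmat, smul_zero]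
      rw [Algebra.algebraMap_eq_smul_one, smul_mul_assoc, one_mul, Matrix.smul_mulVec,
        htrunc, hce, Finset.smul_sum]
      refine Finset.sum_congr rfl fun k _ => ?_
      have hcoev : ∀ (r : ℝ) (z : Fin N → ℂ), r • z = (r : ℂ) • z := fun r z => by
        rw [← algebraMap_smul ℂ r z]; norm_num
      rw [smul_pow, Matrix.smul_mulVec, hcoev, smul_smul, smul_smul]
      congr 1
      push_cast
      ring
    have : Tendsto (fun t : ℝ => ∑ k ∈ Finset.range m,
        (Complex.exp (t * μ) * ((k.factorial : ℂ)⁻¹) * (t : ℂ) ^ k) • (C ^ k *ᵥ y))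
        atTop (nhds 0) := by
      have h0 : Tendsto (fun t : ℝ => ∑ k ∈ Finset.range m,
          (Complex.exp (t * μ) * ((k.factorial : ℂ)⁻¹) * (t : ℂ) ^ k) • (C ^ k *ᵥ y))
          atTop (nhds (∑ k ∈ Finset.range m, (0 : Fin N → ℂ))) := by
        refine tendsto_finset_sum _ fun k _ => ?_
        simpa using (scalar_decay μ hμspec k).smul_const (C ^ k *ᵥ y)
      simpa using h0
    exact this.congr fun t => (key t).symm
  · simpa using tendsto_const_nhds
  · intro y z hy hz
    have := hy.add hz
    simp only [add_zero] at this
    exact this.congr fun t => (Matrix.mulVec_add _ _ _).symm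

lemma exp_map_ofReal {N : ℕ} (A : Matrix (Fin N) (Fin N) ℝ) :
    (exp A).map Complex.ofReal = exp (A.map Complex.ofReal) := by
  have hc : Continuous (Complex.ofRealHom.mapMatrix :
      Matrix (Fin N) (Fin N) ℝ →+* Matrix (Fin N) (Fin N) ℂ) := by
    exact
      (continuous_id (X := Matrix (Fin N) (Fin N) ℝ)).matrix_map Complex.continuous_ofReal
  have h := map_exp (Complex.ofRealHom.mapMatrix :
      Matrix (Fin N) (Fin N) ℝ →+* Matrix (Fin N) (Fin N) ℂ) hc A
  rw [RingHom.mapMatrix_apply, RingHom.mapMatrix_apply] at h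
  have h2 : (Complex.ofRealHom : ℝ →+* ℂ) = Complex.ofReal := rfl
  rw [h2] at h
  exact h

lemma hurwitz_exp_entry_tendsto {N : ℕ} (A : Matrix (Fin N) (Fin N) ℝ)
    (hA : ∀ μ ∈ spectrum ℂ (A.map Complex.ofReal), μ.re < 0) (i j : Fin N) :
    Tendsto (fun t : ℝ => exp (t • A) i j) atTop (nhds 0) := by
  classical
  set B := A.map Complex.ofReal with hB
  have hmap : ∀ t : ℝ, (exp (t • A)).map Complex.ofReal = exp (t • B) := by
    intro t
    rw [exp_map_ofReal]
    congr 1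
    ext a b
    simp [hB, Matrix.map_apply, Complex.real_smul]
  have hvec := hurwitz_exp_mulVec_tendsto B hA (Pi.single j 1)
  have hentry : Tendsto (fun t : ℝ => exp (t • B) i j) atTop (nhds 0) := by
    have h1 : Tendsto (fun t : ℝ => (exp (t • B) *ᵥ Pi.single j 1) i) atTop (nhds 0) := by
      have := tendsto_pi_nhds.mp hvec i
      simpa using this
    refine h1.congr fun t => ?_
    simp [Matrix.mulVec_single]
  have hre : Tendsto (fun t : ℝ => (exp (t • B) i j).re) atTop (nhds 0) := by
    have := (Complex.continuous_re.tendsto 0).comp hentry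
    simpa [Function.comp_def] using this
  refine hre.congr fun t => ?_
  rw [← hmap t]
  simp [Matrix.map_apply]

lemma spectrum_transpose_eq {n : Type*} [Fintype n] [DecidableEq n]
    (M : Matrix n n ℂ) : spectrum ℂ Mᵀ = spectrum ℂ M := by
  ext μ
  rw [spectrum.mem_iff, spectrum.mem_iff, not_iff_not]
  have h : algebraMap ℂ (Matrix n n ℂ) μ - Mᵀ = (algebraMap ℂ (Matrix n n ℂ) μ - M)ᵀ := by
    simp [Matrix.transpose_sub, Algebra.algebraMap_eq_smul_one, Matrix.transpose_smul]
  rw [h, Matrix.isUnit_iff_isUnit_det, Matrix.det_transpose, ← Matrix.isUnit_iff_isUnit_det]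

lemma hasDerivAt_expVec {N : ℕ} (A₀ : Matrix (Fin N) (Fin N) ℝ) (v : Fin N → ℝ) (t : ℝ)
    (i : Fin N) :
    HasDerivAt (fun u : ℝ => (exp (u • A₀) *ᵥ v) i) ((A₀ *ᵥ (exp (t • A₀) *ᵥ v)) i) t := by
  have h := hasDerivAt_exp_smul_const' (𝕂 := ℝ) A₀ t
  let L : Matrix (Fin N) (Fin N) ℝ →ₗ[ℝ] ℝ :=
    { toFun := fun X => (X *ᵥ v) i
      map_add' := fun X Y => by simp [Matrix.add_mulVec]
      map_smul' := fun c X => by simp [Matrix.smul_mulVec] }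
  have h2 := (LinearMap.toContinuousLinearMap L).hasFDerivAt.comp_hasDerivAt t h
  rw [Matrix.mulVec_mulVec]
  exact h2

lemma hasDerivAt_expVec_neg {N : ℕ} (A₀ : Matrix (Fin N) (Fin N) ℝ) (v : Fin N → ℝ) (t : ℝ)
    (i : Fin N) :
    HasDerivAt (fun u : ℝ => (exp ((-u) • A₀) *ᵥ v) i)
      (-(A₀ *ᵥ (exp ((-t) • A₀) *ᵥ v)) i) t := by
  have h := (hasDerivAt_expVec A₀ v (-t) i).comp t (hasDerivAt_neg t)
  simp only [Function.comp_def] at h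
  rw [mul_neg_one] at h
  exact h

lemma hasDerivWithinAt_quadform {N : ℕ} {w : ℝ → Fin N → ℝ} {w' : Fin N → ℝ}
    {S : ℝ → Matrix (Fin N) (Fin N) ℝ} {S' : Matrix (Fin N) (Fin N) ℝ} {s : Set ℝ} {t : ℝ}
    (hw : ∀ i, HasDerivWithinAt (fun u => w u i) (w' i) s t)
    (hS : ∀ i j, HasDerivWithinAt (fun u => S u i j) (S' i j) s t) :
    HasDerivWithinAt (fun u => w u ⬝ᵥ (S u *ᵥ w u))
      (w' ⬝ᵥ (S t *ᵥ w t) + w t ⬝ᵥ (S' *ᵥ w t) + w t ⬝ᵥ (S t *ᵥ w')) s t := by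
  have h : HasDerivWithinAt (fun u => ∑ i, w u i * ∑ j, S u i j * w u j)
      (∑ i, (w' i * ∑ j, S t i j * w t j
        + w t i * ∑ j, (S' i j * w t j + S t i j * w' j))) s t :=
    HasDerivWithinAt.fun_sum fun i _ =>
      ((hw i).mul (HasDerivWithinAt.fun_sum fun j _ => ((hS i j).mul (hw j))))
  have hfun : (fun u => w u ⬝ᵥ (S u *ᵥ w u)) = fun u => ∑ i, w u i * ∑ j, S u i j * w u j := by
    funext u
    simp [dotProduct, Matrix.mulVec]
  rw [hfun]
  convert h using 1
  simp only [dotProduct, Matrix.mulVec, Finset.sum_add_distrib, mul_add,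
    Finset.mul_sum]
  ring_nf

lemma antitoneOn_Ici_of_hasDerivWithinAt_nonpos {f f' : ℝ → ℝ}
    (hf : ∀ t ∈ Set.Ici (0 : ℝ), HasDerivWithinAt f (f' t) (Set.Ici 0) t)
    (h0 : ∀ t ∈ Set.Ici (0 : ℝ), f' t ≤ 0) : AntitoneOn f (Set.Ici 0) := by
  apply antitoneOn_of_deriv_nonpos (convex_Ici 0)
  · exact fun t ht => (hf t ht).continuousWithinAt
  · intro t ht
    rw [interior_Ici] at ht
    exact ((hf t (Set.mem_Ici.mpr (le_of_lt ht))).hasDerivAt (Ici_mem_nhds ht)).differentiableAt.differentiableWithinAt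
  · intro t ht
    rw [interior_Ici] at ht
    rw [((hf t (Set.mem_Ici.mpr ht.le)).hasDerivAt (Ici_mem_nhds ht)).deriv]
    exact h0 t (Set.mem_Ici.mpr ht.le)

lemma transDot {N : ℕ} (X : Matrix (Fin N) (Fin N) ℝ) (a b : Fin N → ℝ) :
    (Xᵀ *ᵥ a) ⬝ᵥ b = a ⬝ᵥ (X *ᵥ b) := by
  rw [Matrix.mulVec_transpose, dotProduct_mulVec]

lemma dotProduct_self_nonneg' {N : ℕ} (x : Fin N → ℝ) : 0 ≤ x ⬝ᵥ x :=
  Finset.sum_nonneg fun i _ => mul_self_nonneg (x i)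

lemma sq_le_dotProduct_self {N : ℕ} (x : Fin N → ℝ) (i : Fin N) : x i ^ 2 ≤ x ⬝ᵥ x := by
  simpa [dotProduct, pow_two] using
    Finset.single_le_sum (f := fun j => x j * x j) (fun j _ => mul_self_nonneg (x j))
      (Finset.mem_univ i)

lemma quad_le_abs_sum {N : ℕ} (X : Matrix (Fin N) (Fin N) ℝ) (x : Fin N → ℝ) :
    x ⬝ᵥ (X *ᵥ x) ≤ (∑ i, ∑ j, |X i j|) * (x ⬝ᵥ x) := by
  have hstep : x ⬝ᵥ (X *ᵥ x) = ∑ i, ∑ j, x i * (X i j * x j) := by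
    simp [dotProduct, Matrix.mulVec, Finset.mul_sum]
  rw [hstep, Finset.sum_mul]
  refine Finset.sum_le_sum fun i _ => ?_
  rw [Finset.sum_mul]
  refine Finset.sum_le_sum fun j _ => ?_
  have h1 : x i * (X i j * x j) ≤ |x i * (X i j * x j)| := le_abs_self _
  have h2 : |x i * (X i j * x j)| = |X i j| * (|x i| * |x j|) := by
    rw [abs_mul, abs_mul]; ring
  have hii := sq_le_dotProduct_self x i
  have hjj := sq_le_dotProduct_self x j
  have h3 : |x i| * |x j| ≤ x ⬝ᵥ x := by
    nlinarith [abs_nonneg (x i), abs_nonneg (x j), sq_abs (x i), sq_abs (x j),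
      sq_nonneg (|x i| - |x j|)]
  nlinarith [abs_nonneg (X i j)]
lemma quad_deriv_identity {N : ℕ} (A S Qd : Matrix (Fin N) (Fin N) ℝ) (z : Fin N → ℝ) :
    z ⬝ᵥ ((Qd - A * S - S * Aᵀ) *ᵥ z)
      = (-(Aᵀ *ᵥ z)) ⬝ᵥ (S *ᵥ z) + z ⬝ᵥ (Qd *ᵥ z) + z ⬝ᵥ (S *ᵥ (-(Aᵀ *ᵥ z))) := by
  rw [neg_dotProduct, transDot A z (S *ᵥ z), Matrix.mulVec_mulVec,
    Matrix.mulVec_neg, dotProduct_neg, Matrix.mulVec_mulVec,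
    Matrix.sub_mulVec, Matrix.sub_mulVec, dotProduct_sub, dotProduct_sub]
  ring

lemma quad_deriv_identity_P {N : ℕ} (A P : Matrix (Fin N) (Fin N) ℝ) (z : Fin N → ℝ) :
    z ⬝ᵥ ((A * P + P * Aᵀ) *ᵥ z)
      = (Aᵀ *ᵥ z) ⬝ᵥ (P *ᵥ z) + z ⬝ᵥ ((0 : Matrix (Fin N) (Fin N) ℝ) *ᵥ z)
        + z ⬝ᵥ (P *ᵥ (Aᵀ *ᵥ z)) := by
  rw [transDot A z (P *ᵥ z), Matrix.mulVec_mulVec, Matrix.mulVec_mulVec,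
    Matrix.add_mulVec, dotProduct_add, Matrix.zero_mulVec, dotProduct_zero]
  ring

/-- Let `A` be Hurwitz, `M ⪰ 0`, and `P` symmetric with
`A P + P Aᵀ + M ⪯ 0`. If `Q` is a differentiable symmetric-matrix-valued function with
`Q′(t) ⪯ A Q(t) + Q(t) Aᵀ + M` for all `t ≥ 0`, then for every `v`,
`limsup_{t→∞} vᵀ Q(t) v ≤ vᵀ P v`; in particular for every `ε > 0` there is `T` with
`Q(t) ⪯ P + ε I` for all `t ≥ T`. -/
theorem lyapunov_covariance_bound (N : ℕ) (A : Matrix (Fin N) (Fin N) ℝ)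
    (hHurwitz : ∀ μ ∈ spectrum ℂ (A.map Complex.ofReal), μ.re < 0)
    (M : Matrix (Fin N) (Fin N) ℝ) (hM : M.PosSemidef)
    (P : Matrix (Fin N) (Fin N) ℝ) (hPsymm : P.IsSymm)
    (hP : (-(A * P + P * Aᵀ + M)).PosSemidef)
    (Q Q' : ℝ → Matrix (Fin N) (Fin N) ℝ)
    (hQsymm : ∀ t ∈ Set.Ici (0 : ℝ), (Q t).IsSymm)
    (hderiv : ∀ t ∈ Set.Ici (0 : ℝ), ∀ i j,
      HasDerivWithinAt (fun s => Q s i j) (Q' t i j) (Set.Ici 0) t)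
    (hineq : ∀ t ∈ Set.Ici (0 : ℝ), (A * Q t + Q t * Aᵀ + M - Q' t).PosSemidef) :
    (∀ v : Fin N → ℝ, limsup (fun t => v ⬝ᵥ (Q t) *ᵥ v) atTop ≤ v ⬝ᵥ P *ᵥ v)
      ∧ ∀ ε > (0 : ℝ), ∃ T : ℝ, ∀ t ≥ T,
          (P + ε • (1 : Matrix (Fin N) (Fin N) ℝ) - Q t).PosSemidef := by
  classical
  have psd : ∀ {X : Matrix (Fin N) (Fin N) ℝ}, X.PosSemidef → ∀ x : Fin N → ℝ,
      0 ≤ x ⬝ᵥ (X *ᵥ x) := fun hX x => by simpa using hX.dotProduct_mulVec_nonneg x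
  -- entry decay of exp(t Aᵀ)
  have hEntry : ∀ i j, Tendsto (fun t : ℝ => exp (t • Aᵀ) i j) atTop (nhds 0) := by
    intro i j
    apply hurwitz_exp_entry_tendsto Aᵀ
    have h1 : (Aᵀ).map Complex.ofReal = (A.map Complex.ofReal)ᵀ := by
      simp [Matrix.transpose_map]
    rw [h1, spectrum_transpose_eq]
    exact hHurwitz
  -- antitonicity of the transported quadratic form
  have hkey : ∀ u : Fin N → ℝ, AntitoneOn
      (fun t => (exp ((-t) • Aᵀ) *ᵥ u) ⬝ᵥ ((Q t - P) *ᵥ (exp ((-t) • Aᵀ) *ᵥ u)))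
      (Set.Ici 0) := by
    intro u
    set w : ℝ → Fin N → ℝ := fun s => exp ((-s) • Aᵀ) *ᵥ u with hwdef
    apply antitoneOn_Ici_of_hasDerivWithinAt_nonpos
      (f' := fun t => w t ⬝ᵥ ((Q' t - A * (Q t - P) - (Q t - P) * Aᵀ) *ᵥ w t))
    · intro t ht
      have hw : ∀ i, HasDerivWithinAt (fun s => w s i) ((-(Aᵀ *ᵥ w t)) i) (Set.Ici 0) t :=
        fun i => (hasDerivAt_expVec_neg Aᵀ u t i).hasDerivWithinAt
      have hS : ∀ i j, HasDerivWithinAt (fun s => (Q s - P) i j) (Q' t i j) (Set.Ici 0) t :=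
        fun i j => by simpa [Matrix.sub_apply] using (hderiv t ht i j).sub_const (P i j)
      have h := hasDerivWithinAt_quadform (w := w) (w' := -(Aᵀ *ᵥ w t))
        (S := fun s => Q s - P) (S' := Q' t) hw hS
      convert h using 1
      exact quad_deriv_identity A (Q t - P) (Q' t) (w t)
    · intro t ht
      have hsplit : Q' t - A * (Q t - P) - (Q t - P) * Aᵀ
          = -((A * Q t + Q t * Aᵀ + M - Q' t) + -(A * P + P * Aᵀ + M)) := by
        noncomm_ring
      rw [hsplit, Matrix.neg_mulVec, dotProduct_neg, Matrix.add_mulVec,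
        dotProduct_add, neg_nonpos]
      exact add_nonneg (psd (hineq t ht) (w t)) (psd hP (w t))
  -- key pointwise bound
  have hbound : ∀ t ∈ Set.Ici (0 : ℝ), ∀ v : Fin N → ℝ,
      v ⬝ᵥ ((Q t - P) *ᵥ v)
        ≤ (exp (t • Aᵀ) *ᵥ v) ⬝ᵥ ((Q 0 - P) *ᵥ (exp (t • Aᵀ) *ᵥ v)) := by
    intro t ht v
    set u : Fin N → ℝ := exp (t • Aᵀ) *ᵥ v with hu
    have h1 := hkey u Set.self_mem_Ici ht ht
    have hwu : exp ((-t) • Aᵀ) *ᵥ u = v := by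
      have hcomm : Commute ((-t) • Aᵀ) (t • Aᵀ) :=
        ((Commute.refl Aᵀ).smul_left (-t)).smul_right t
      rw [hu, Matrix.mulVec_mulVec, ← Matrix.exp_add_of_commute _ _ hcomm]
      have hzero : (-t) • Aᵀ + t • Aᵀ = 0 := by rw [← add_smul]; simp
      rw [hzero, exp_zero, Matrix.one_mulVec]
    have h0 : exp ((-(0 : ℝ)) • Aᵀ) *ᵥ u = u := by
      simp [exp_zero]
    simp only at h1
    rw [hwu, h0] at h1
    exact h1
  -- tendsto of transported quadratic forms
  have hEv : ∀ (v : Fin N → ℝ) (i : Fin N),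
      Tendsto (fun t : ℝ => (exp (t • Aᵀ) *ᵥ v) i) atTop (nhds 0) := by
    intro v i
    have h1 : (fun t : ℝ => (exp (t • Aᵀ) *ᵥ v) i)
        = fun t => ∑ j, exp (t • Aᵀ) i j * v j := by
      funext t; simp [Matrix.mulVec, dotProduct]
    rw [h1]
    have h0 := tendsto_finset_sum Finset.univ fun j (_ : j ∈ Finset.univ) =>
      (hEntry i j).mul_const (v j)
    simpa using h0
  have hquadtend : ∀ (X : Matrix (Fin N) (Fin N) ℝ) (v : Fin N → ℝ),
      Tendsto (fun t : ℝ => (exp (t • Aᵀ) *ᵥ v) ⬝ᵥ (X *ᵥ (exp (t • Aᵀ) *ᵥ v)))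
        atTop (nhds 0) := by
    intro X v
    have h1 : (fun t : ℝ => (exp (t • Aᵀ) *ᵥ v) ⬝ᵥ (X *ᵥ (exp (t • Aᵀ) *ᵥ v)))
        = fun t => ∑ i, (exp (t • Aᵀ) *ᵥ v) i * ∑ j, X i j * (exp (t • Aᵀ) *ᵥ v) j := by
      funext t; simp [dotProduct, Matrix.mulVec]
    rw [h1]
    have h0 := tendsto_finset_sum Finset.univ fun i (_ : i ∈ Finset.univ) =>
      (hEv v i).mul (tendsto_finset_sum Finset.univ fun j (_ : j ∈ Finset.univ) =>
        (tendsto_const_nhds : Tendsto (fun _ : ℝ => X i j) atTop (nhds (X i j))).mul (hEv v j))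
    simpa using h0
  -- nonnegativity of v ⬝ᵥ P v
  have hL0 : ∀ v : Fin N → ℝ, 0 ≤ v ⬝ᵥ P *ᵥ v := by
    intro v
    set w : ℝ → Fin N → ℝ := fun s => exp (s • Aᵀ) *ᵥ v with hwdef
    have hg : AntitoneOn (fun t => w t ⬝ᵥ (P *ᵥ w t)) (Set.Ici 0) := by
      apply antitoneOn_Ici_of_hasDerivWithinAt_nonpos
        (f' := fun t => w t ⬝ᵥ ((A * P + P * Aᵀ) *ᵥ w t))
      · intro t ht
        have hw : ∀ i, HasDerivWithinAt (fun s => w s i) ((Aᵀ *ᵥ w t) i) (Set.Ici 0) t :=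
          fun i => (hasDerivAt_expVec Aᵀ v t i).hasDerivWithinAt
        have hS : ∀ i j, HasDerivWithinAt (fun _ : ℝ => P i j)
            ((0 : Matrix (Fin N) (Fin N) ℝ) i j) (Set.Ici 0) t := fun i j => by
          simpa using (hasDerivWithinAt_const t (Set.Ici (0:ℝ)) (P i j))
        have h := hasDerivWithinAt_quadform (w := w) (w' := Aᵀ *ᵥ w t)
          (S := fun _ => P) (S' := 0) hw hS
        convert h using 1
        exact quad_deriv_identity_P A P (w t)
      · intro t ht
        have hsplit : A * P + P * Aᵀ = -(M + -(A * P + P * Aᵀ + M)) := by abel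
        rw [hsplit, Matrix.neg_mulVec, dotProduct_neg, Matrix.add_mulVec,
          dotProduct_add, neg_nonpos]
        exact add_nonneg (psd hM (w t)) (psd hP (w t))
    have hgt := hquadtend P v
    have hub : ∀ᶠ t in atTop, w t ⬝ᵥ (P *ᵥ w t) ≤ w 0 ⬝ᵥ (P *ᵥ w 0) := by
      filter_upwards [eventually_ge_atTop (0 : ℝ)] with t ht
      exact hg Set.self_mem_Ici ht ht
    have h00 : w 0 ⬝ᵥ (P *ᵥ w 0) = v ⬝ᵥ P *ᵥ v := by
      simp [hwdef, exp_zero]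
    have := le_of_tendsto hgt hub
    rwa [h00] at this
  constructor
  · -- limsup part
    intro v
    have hL0v := hL0 v
    have hmem : ∀ ε > (0 : ℝ),
        (v ⬝ᵥ P *ᵥ v + ε) ∈ {a | ∀ᶠ (n : ℝ) in atTop, v ⬝ᵥ Q n *ᵥ v ≤ a} := by
      intro ε hε
      have hev : ∀ᶠ t : ℝ in atTop,
          (exp (t • Aᵀ) *ᵥ v) ⬝ᵥ ((Q 0 - P) *ᵥ (exp (t • Aᵀ) *ᵥ v)) < ε :=
        (hquadtend (Q 0 - P) v).eventually_lt_const hε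
      filter_upwards [eventually_ge_atTop (0 : ℝ), hev] with t ht hlt
      have hb := hbound t ht v
      rw [Matrix.sub_mulVec, dotProduct_sub] at hb
      have : v ⬝ᵥ Q t *ᵥ v - v ⬝ᵥ P *ᵥ v ≤ ε := le_of_lt (lt_of_le_of_lt hb hlt)
      linarith
    rw [limsup_eq]
    by_cases hbb : BddBelow {a | ∀ᶠ (n : ℝ) in atTop, v ⬝ᵥ Q n *ᵥ v ≤ a}
    · refine le_of_forall_pos_le_add fun ε hε => csInf_le hbb (hmem ε hε)
    · rw [Real.sInf_of_not_bddBelow hbb]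
      exact hL0v
  · -- uniform part
    intro ε hε
    set R0 : Matrix (Fin N) (Fin N) ℝ := Q 0 - P with hR0
    have hPhi : ∀ i j, Tendsto
        (fun t : ℝ => ((exp (t • Aᵀ))ᵀ * R0 * exp (t • Aᵀ)) i j) atTop (nhds 0) := by
      intro i j
      have hrw : (fun t : ℝ => ((exp (t • Aᵀ))ᵀ * R0 * exp (t • Aᵀ)) i j)
          = fun t => ∑ l, (∑ k, exp (t • Aᵀ) k i * R0 k l) * exp (t • Aᵀ) l j := by
        funext t
        simp [Matrix.mul_apply, Matrix.transpose_apply]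
      rw [hrw]
      have h0 := tendsto_finset_sum Finset.univ fun l (_ : l ∈ Finset.univ) =>
        (tendsto_finset_sum Finset.univ fun k (_ : k ∈ Finset.univ) =>
          (hEntry k i).mul_const (R0 k l)).mul (hEntry l j)
      simpa using h0
    have hc : Tendsto (fun t : ℝ =>
        ∑ i, ∑ j, |((exp (t • Aᵀ))ᵀ * R0 * exp (t • Aᵀ)) i j|) atTop (nhds 0) := by
      have h0 := tendsto_finset_sum Finset.univ fun i (_ : i ∈ Finset.univ) =>
        tendsto_finset_sum Finset.univ fun j (_ : j ∈ Finset.univ) => (hPhi i j).abs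
      simpa using h0
    obtain ⟨T, hT⟩ := Filter.eventually_atTop.mp
      ((hc.eventually_lt_const hε).and (eventually_ge_atTop (0 : ℝ)))
    refine ⟨T, fun t ht => ?_⟩
    obtain ⟨hct, ht0⟩ := hT t ht
    refine Matrix.PosSemidef.of_dotProduct_mulVec_nonneg ?_ ?_
    · show (P + ε • 1 - Q t).IsSymm
      show (P + ε • 1 - Q t)ᵀ = P + ε • 1 - Q t
      rw [Matrix.transpose_sub, Matrix.transpose_add, Matrix.transpose_smul,
        Matrix.transpose_one, hPsymm, hQsymm t ht0]
    · intro x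
      have hx0 : star x = x := by simp
      rw [hx0]
      have hb := hbound t ht0 x
      have habs : (exp (t • Aᵀ) *ᵥ x) ⬝ᵥ (R0 *ᵥ (exp (t • Aᵀ) *ᵥ x))
          = x ⬝ᵥ (((exp (t • Aᵀ))ᵀ * R0 * exp (t • Aᵀ)) *ᵥ x) := by
        have h1 := transDot (exp (t • Aᵀ))ᵀ x (R0 *ᵥ (exp (t • Aᵀ) *ᵥ x))
        rw [Matrix.transpose_transpose] at h1
        rw [h1, Matrix.mulVec_mulVec, Matrix.mulVec_mulVec, mul_assoc]
      have hquad := quad_le_abs_sum ((exp (t • Aᵀ))ᵀ * R0 * exp (t • Aᵀ)) x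
      have hxx : 0 ≤ x ⬝ᵥ x := dotProduct_self_nonneg' x
      have hb2 : x ⬝ᵥ ((Q t - P) *ᵥ x)
          ≤ (∑ i, ∑ j, |((exp (t • Aᵀ))ᵀ * R0 * exp (t • Aᵀ)) i j|) * (x ⬝ᵥ x) := by
        rw [hR0] at habs
        calc x ⬝ᵥ ((Q t - P) *ᵥ x) ≤ _ := hb
        _ = _ := habs
        _ ≤ _ := hquad
      have hexp : (P + ε • 1 - Q t) *ᵥ x = P *ᵥ x + ε • x - Q t *ᵥ x := by
        rw [Matrix.sub_mulVec, Matrix.add_mulVec, Matrix.smul_mulVec,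
          Matrix.one_mulVec]
      rw [hexp, dotProduct_sub, dotProduct_add, dotProduct_smul]
      rw [Matrix.sub_mulVec, dotProduct_sub] at hb2
      have hcsum : (∑ i, ∑ j, |((exp (t • Aᵀ))ᵀ * R0 * exp (t • Aᵀ)) i j|) * (x ⬝ᵥ x)
          ≤ ε * (x ⬝ᵥ x) := mul_le_mul_of_nonneg_right (le_of_lt hct) hxx
      have hsmul : ε • (x ⬝ᵥ x) = ε * (x ⬝ᵥ x) := rfl
      rw [hsmul]
      linarith
end
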